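/- In the GP-style encoding of a two-agent causal Bell scenario with ω₁ < ω₂, every strategy σ over the full scenario determines a unique pair of functions (g : I₁ → O₁, h : I₁ × I₂ → O₂) such that {((ω₁,i), g(i))} ∈ σ for all i ∈ I₁, and {((ω₁,i), g(i)), ((ω₂,j), h(i,j))} ∈ σ for all i ∈ I₁, j ∈ I₂. -/
import Mathlib


/-- A causal measurement scenario: a type of measurements `X`, outcome sets
`O x`, and an enabling relation from sets of events to measurements. -/
structure CMS (X Ω : Type*) where
  O : X → Set Ω
  enab : Set (X × Ω) → X → Prop

namespace CMS

variable {X Ω : Type*}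

/-- A set of events is consistent if it is the graph of a partial function. -/
def consistent (s : Set (X × Ω)) : Prop :=
  ∀ x o o', (x, o) ∈ s → (x, o') ∈ s → o = o'

/-- The domain of a set of events: the measurements performed. -/
def domain (s : Set (X × Ω)) : Set X := {x | ∃ o, (x, o) ∈ s}

/-- Accessibility: `x` may be performed after the events in `s`. -/
def acc (M : CMS X Ω) (s : Set (X × Ω)) (x : X) : Prop :=
  x ∉ domain s ∧ ∃ t ⊆ s, M.enab t x

/-- Histories: the least family containing `∅` and closed under adjoining
an event `(x, o)` for accessible `x` and `o ∈ O x`. -/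
inductive Hist (M : CMS X Ω) : Set (X × Ω) → Prop
  | empty : Hist M ∅
  | step {s : Set (X × Ω)} {x : X} {o : Ω} :
      Hist M s → M.acc s x → o ∈ M.O x → Hist M (s ∪ {(x, o)})

/-- A strategy for Nature: a (nonempty) downward-closed set of histories,
deterministic and total: unique outcome responses to accessible measurements. -/
structure IsStrategy (M : CMS X Ω) (σ : Set (Set (X × Ω))) : Prop where
  nonempty : σ.Nonempty
  hist : ∀ s ∈ σ, M.Hist s
  dc : ∀ s t : Set (X × Ω), M.Hist s → s ⊆ t → t ∈ σ → s ∈ σ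
  resp : ∀ s ∈ σ, ∀ x : X, M.acc s x →
    ∃! o : Ω, o ∈ M.O x ∧ s ∪ {(x, o)} ∈ σ

/-- The restriction `M_U` of a scenario to a subset `U` of measurements. -/
def restrict (M : CMS X Ω) (U : Set X) : CMS X Ω where
  O := M.O
  enab := fun s x => M.enab s x ∧ domain s ∪ {x} ⊆ U

end CMS

open CMS

/-- The GP-style encoding of the two-agent causal Bell scenario with ω₁ < ω₂. -/
def GP (I₁ I₂ O₁ O₂ : Type*) : CMS (I₁ ⊕ I₂) (O₁ ⊕ O₂) where
  O := fun x => Sum.elim (fun _ => (Set.range Sum.inl : Set (O₁ ⊕ O₂)))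
    (fun _ => (Set.range Sum.inr : Set (O₁ ⊕ O₂))) x
  enab := fun s x => Sum.elim (fun _ => s = ∅)
    (fun _ => ∃ (i : I₁) (o : O₁), s = {(Sum.inl i, Sum.inl o)}) x

/-- Every strategy over the two-agent GP scenario determines a unique pair of
functions `(g : I₁ → O₁, h : I₁ × I₂ → O₂)`. -/
theorem gp_strategy_functions (I₁ I₂ O₁ O₂ : Type*)
    [Finite I₁] [Finite I₂] [Finite O₁] [Finite O₂]
    [Nonempty I₁] [Nonempty I₂] [Nonempty O₁] [Nonempty O₂]
    (σ : Set (Set ((I₁ ⊕ I₂) × (O₁ ⊕ O₂))))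
    (hσ : (GP I₁ I₂ O₁ O₂).IsStrategy σ) :
    ∃! p : (I₁ → O₁) × (I₁ × I₂ → O₂),
      (∀ i : I₁,
        ({(Sum.inl i, Sum.inl (p.1 i))} : Set ((I₁ ⊕ I₂) × (O₁ ⊕ O₂))) ∈ σ) ∧
      (∀ (i : I₁) (j : I₂),
        ({(Sum.inl i, Sum.inl (p.1 i)), (Sum.inr j, Sum.inr (p.2 (i, j)))} :
          Set ((I₁ ⊕ I₂) × (O₁ ⊕ O₂))) ∈ σ) := by
  classical
  set M := GP I₁ I₂ O₁ O₂ with hM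
  -- ∅ ∈ σ
  obtain ⟨s₀, hs₀⟩ := hσ.nonempty
  have hempty : (∅ : Set ((I₁ ⊕ I₂) × (O₁ ⊕ O₂))) ∈ σ :=
    hσ.dc ∅ s₀ CMS.Hist.empty (Set.empty_subset _) hs₀
  -- first round
  have H1 : ∀ i : I₁, ∃! o : O₁ ⊕ O₂,
      o ∈ Set.range (Sum.inl : O₁ → O₁ ⊕ O₂) ∧
      ({(Sum.inl i, o)} : Set ((I₁ ⊕ I₂) × (O₁ ⊕ O₂))) ∈ σ := by
    intro i
    have hacc : M.acc ∅ (Sum.inl i) := by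
      constructor
      · rintro ⟨o, ho⟩; exact ho
      · exact ⟨∅, Set.Subset.rfl, rfl⟩
    have := hσ.resp ∅ hempty (Sum.inl i) hacc
    simpa [hM, GP, Set.empty_union] using this
  choose f hf hfu using H1
  choose g hg using fun i => (hf i).1
  have hfg : ∀ i, f i = Sum.inl (g i) := fun i => (hg i).symm
  have hsing : ∀ i : I₁,
      ({(Sum.inl i, Sum.inl (g i))} : Set ((I₁ ⊕ I₂) × (O₁ ⊕ O₂))) ∈ σ := by
    intro i; have := (hf i).2; rwa [hfg i] at this
  -- second round
  have H2 : ∀ (i : I₁) (j : I₂), ∃! o : O₁ ⊕ O₂,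
      o ∈ Set.range (Sum.inr : O₂ → O₁ ⊕ O₂) ∧
      ({(Sum.inl i, Sum.inl (g i)), (Sum.inr j, o)} :
        Set ((I₁ ⊕ I₂) × (O₁ ⊕ O₂))) ∈ σ := by
    intro i j
    set s : Set ((I₁ ⊕ I₂) × (O₁ ⊕ O₂)) := {(Sum.inl i, Sum.inl (g i))} with hs
    have hacc : M.acc s (Sum.inr j) := by
      constructor
      · rintro ⟨o, ho⟩
        simp only [hs, Set.mem_singleton_iff, Prod.mk.injEq] at ho
        exact absurd ho.1 (by simp)
      · exact ⟨s, Set.Subset.rfl, ⟨i, g i, rfl⟩⟩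
    have := hσ.resp s (hsing i) (Sum.inr j) hacc
    have hun : ∀ o : O₁ ⊕ O₂, s ∪ {(Sum.inr j, o)} =
        ({(Sum.inl i, Sum.inl (g i)), (Sum.inr j, o)} :
          Set ((I₁ ⊕ I₂) × (O₁ ⊕ O₂))) := by
      intro o; rw [hs, Set.union_singleton, Set.pair_comm]
    simpa [hM, GP, hun] using this
  choose F hF hFu using H2
  choose h hh using fun i j => (hF i j).1
  have hFh : ∀ i j, F i j = Sum.inr (h i j) := fun i j => (hh i j).symm
  have hpair : ∀ (i : I₁) (j : I₂),
      ({(Sum.inl i, Sum.inl (g i)), (Sum.inr j, Sum.inr (h i j))} :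
        Set ((I₁ ⊕ I₂) × (O₁ ⊕ O₂))) ∈ σ := by
    intro i j; have := (hF i j).2; rwa [hFh i j] at this
  refine ⟨(g, fun p => h p.1 p.2), ⟨hsing, fun i j => hpair i j⟩, ?_⟩
  rintro ⟨g', h'⟩ ⟨hg', hh'⟩
  have hgg : g' = g := by
    funext i
    have := hfu i (Sum.inl (g' i)) ⟨Set.mem_range_self _, hg' i⟩
    rw [hfg i] at this
    exact Sum.inl_injective this
  subst hgg
  have hhh : ∀ i j, h' (i, j) = h i j := by
    intro i j
    have := hFu i j (Sum.inr (h' (i, j))) ⟨Set.mem_range_self _, hh' i j⟩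
    rw [hFh i j] at this
    exact Sum.inr_injective this
  exact congrArg (Prod.mk g') (funext fun p => hhh p.1 p.2)
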